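/- Every simplicial complex is the auxiliary complex of a simplicial complex satisfying property I: let T be a simplicial complex on vertex set {1,…,n} with minimal nonfaces α_1, …, α_r, and let S be the simplicial complex on vertex set {1,…,n+1} whose minimal nonfaces are σ_i = α_i ∪ {n+1}. Then S satisfies property I with witnesses α_1, …, α_r, its auxiliary complex T(S) equals T, and χ_c(S)(t) = t^{n+1} · Σ_{F ∈ T} t^{−|F|} (1 − t^{−1})^{n−|F|} in ℤ[t,t⁻¹]. -/

import Mathlib

open Finset LaurentPolynomial

noncomputable section

/-- The union `σ_I = ⋃_{i ∈ I} σ_i`. -/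
def unionOver {ι V : Type*} [DecidableEq V] (σ : ι → Finset V) (I : Finset ι) : Finset V :=
  I.sup σ

/-- The intersection graph `G_I` on the vertex set `I`. -/
def interGraph {ι V : Type*} [DecidableEq V] (σ : ι → Finset V) (I : Finset ι) :
    SimpleGraph {i // i ∈ I} where
  Adj i j := i ≠ j ∧ (σ i.1 ∩ σ j.1).Nonempty
  symm := by
    constructor
    intro i j h
    exact ⟨h.1.symm, by rw [Finset.inter_comm]; exact h.2⟩
  loopless := by constructor; intro i h; exact h.1 rfl

/-- `c(I)`, the number of connected components of `G_I`. -/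
def compCount {ι V : Type*} [DecidableEq V] (σ : ι → Finset V) (I : Finset ι) : ℕ :=
  Nat.card (interGraph σ I).ConnectedComponent

/-- Property I. -/
def PropertyI {ι V W : Type*} [DecidableEq V] [DecidableEq W]
    (σ : ι → Finset V) (α : ι → Finset W) : Prop :=
  (∀ i, (α i).card + 1 = (σ i).card) ∧
  ∀ I : Finset ι, I.Nonempty → ∀ p ∉ I,
    (unionOver σ I ∩ σ p = ∅ → unionOver α I ∩ α p = ∅) ∧
    ((unionOver σ I ∩ σ p).Nonempty →
      (unionOver α I ∩ α p).card + 1 = (unionOver σ I ∩ σ p).card)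

/-- The simplicial chromatic polynomial. -/
def simpChrom {ι : Type*} [Fintype ι] [DecidableEq ι] {n : ℕ} (σ : ι → Finset (Fin n)) :
    LaurentPolynomial ℤ :=
  T (n : ℤ) +
  ∑ I ∈ (univ : Finset ι).powerset.filter (fun I => I.Nonempty),
    (-1) ^ I.card *
      T ((n : ℤ) - ((unionOver σ I).card : ℤ) + (compCount σ I : ℤ))

/-- Faces of the complex whose minimal nonfaces are the `α i`. -/
def facesOf {ι : Type*} [Fintype ι] {N : ℕ} (α : ι → Finset (Fin N)) :
    Finset (Finset (Fin N)) :=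
  (univ : Finset (Finset (Fin N))).filter (fun F => ∀ i, ¬ α i ⊆ F)

/-- Coefficient of `t^k` in a Laurent polynomial. -/
def lcoeff (p : LaurentPolynomial ℤ) (k : ℤ) : ℤ := p.coeff k

end



section helpers
variable {n r : ℕ}

lemma last_not_mem_image (s : Finset (Fin n)) :
    Fin.last n ∉ s.image Fin.castSucc := by
  simp only [mem_image, not_exists]
  rintro a ⟨-, h⟩
  exact absurd h (Fin.castSucc_lt_last a).ne

lemma insert_image_inter (s t : Finset (Fin n)) :
    (insert (Fin.last n) (s.image Fin.castSucc)) ∩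
      (insert (Fin.last n) (t.image Fin.castSucc)) =
    insert (Fin.last n) ((s ∩ t).image Fin.castSucc) := by
  rw [← insert_inter_distrib, Finset.image_inter _ _ (Fin.castSucc_injective n)]

lemma card_insert_image (s : Finset (Fin n)) :
    (insert (Fin.last n) (s.image Fin.castSucc)).card = s.card + 1 := by
  rw [card_insert_of_notMem (last_not_mem_image s),
    Finset.card_image_of_injective _ (Fin.castSucc_injective n)]

lemma unionOver_insert_image (α : Fin r → Finset (Fin n)) (I : Finset (Fin r))
    (hI : I.Nonempty) :
    unionOver (fun i => insert (Fin.last n) ((α i).image Fin.castSucc)) I =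
      insert (Fin.last n) ((unionOver α I).image Fin.castSucc) := by
  ext x
  simp only [unionOver, mem_sup, mem_insert, mem_image]
  constructor
  · rintro ⟨i, hi, hx⟩
    rcases hx with h | ⟨a, ha, rfl⟩
    · exact Or.inl h
    · exact Or.inr ⟨a, ⟨i, hi, ha⟩, rfl⟩
  · rintro (rfl | ⟨a, ⟨i, hi, ha⟩, rfl⟩)
    · exact ⟨hI.choose, hI.choose_spec, Or.inl rfl⟩
    · exact ⟨i, hi, Or.inr ⟨a, ha, rfl⟩⟩

end helpers

section sums
variable {n r : ℕ}

lemma unionOver_subset_iff (α : Fin r → Finset (Fin n)) (I : Finset (Fin r))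
    (F : Finset (Fin n)) : unionOver α I ⊆ F ↔ ∀ i ∈ I, α i ⊆ F := by
  rw [unionOver, ← Finset.le_iff_subset, Finset.sup_le_iff]

lemma face_indicator (α : Fin r → Finset (Fin n)) (F : Finset (Fin n)) :
    (if ∀ i, ¬ α i ⊆ F then (1 : LaurentPolynomial ℤ) else 0) =
    ∑ I ∈ (univ : Finset (Fin r)).powerset,
      (if unionOver α I ⊆ F then (-1 : LaurentPolynomial ℤ) ^ I.card else 0) := by
  classical
  set J := univ.filter (fun i => α i ⊆ F) with hJ
  have h1 : (univ : Finset (Fin r)).powerset.filter (fun I => unionOver α I ⊆ F)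
      = J.powerset := by
    ext I
    simp only [mem_filter, mem_powerset, hJ]
    rw [unionOver_subset_iff]
    constructor
    · rintro ⟨-, h⟩ i hi
      exact mem_filter.2 ⟨mem_univ i, h i hi⟩
    · intro h
      exact ⟨subset_univ I, fun i hi => (mem_filter.1 (h hi)).2⟩
  rw [← Finset.sum_filter, h1]
  have key := congrArg (Int.cast : ℤ → LaurentPolynomial ℤ)
    (Finset.sum_powerset_neg_one_pow_card (x := J))
  push_cast at key
  rw [key]
  have h2 : (∀ i, ¬ α i ⊆ F) ↔ J = ∅ := by
    simp [hJ, Finset.filter_eq_empty_iff]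
  simp only [h2]

lemma sum_superset_T (A : Finset (Fin n)) :
    ∑ F ∈ (univ : Finset (Finset (Fin n))).filter (fun F => A ⊆ F),
      (T (-(F.card : ℤ)) : LaurentPolynomial ℤ) * (1 - T (-1)) ^ (n - F.card)
      = (T (-(A.card : ℤ)) : LaurentPolynomial ℤ) := by
  classical
  set s : Finset (Fin n) := univ \ A with hs
  have hscard : A.card + s.card = n := by
    rw [hs, card_sdiff_of_subset (subset_univ A), card_fin]
    have := card_le_card (subset_univ A)
    rw [card_fin] at this
    omega
  have step1 : ∑ F ∈ (univ : Finset (Finset (Fin n))).filter (fun F => A ⊆ F),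
      (T (-(F.card : ℤ)) : LaurentPolynomial ℤ) * (1 - T (-1)) ^ (n - F.card)
      = ∑ K ∈ s.powerset, (T (-((A.card + K.card : ℕ) : ℤ)) : LaurentPolynomial ℤ) *
          (1 - T (-1)) ^ (n - (A.card + K.card)) := by
    refine Finset.sum_nbij' (fun F => F \ A) (fun K => A ∪ K) ?_ ?_ ?_ ?_ ?_
    · intro F hF
      rw [mem_powerset, hs]
      exact sdiff_subset_sdiff (subset_univ F) le_rfl
    · intro K hK
      simp only [mem_filter, mem_univ, true_and]
      exact subset_union_left
    · intro F hF
      exact union_sdiff_of_subset (mem_filter.1 hF).2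
    · intro K hK
      exact union_sdiff_cancel_left ((subset_sdiff.1 (mem_powerset.1 hK)).2).symm
    · intro F hF
      have hsub := (mem_filter.1 hF).2
      have hc : A.card + (F \ A).card = F.card := by
        rw [card_sdiff_of_subset hsub]
        have := card_le_card hsub
        omega
      rw [hc]
  rw [step1]
  have expand : ∀ K ∈ s.powerset,
      (T (-((A.card + K.card : ℕ) : ℤ)) : LaurentPolynomial ℤ) *
          (1 - T (-1)) ^ (n - (A.card + K.card))
      = T (-(A.card : ℤ)) * (T (-1) ^ K.card * (1 - T (-1)) ^ (s.card - K.card)) := by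
    intro K hK
    have hK' : K.card ≤ s.card := card_le_card (mem_powerset.1 hK)
    have h1 : n - (A.card + K.card) = s.card - K.card := by omega
    have h2 : (-(((A.card + K.card : ℕ)) : ℤ)) = -(A.card : ℤ) + (K.card : ℤ) * (-1) := by
      push_cast; ring
    rw [h1, h2, T_add, T_pow, mul_assoc]
  rw [Finset.sum_congr rfl expand, ← Finset.mul_sum]
  have binom : ∑ K ∈ s.powerset,
      (T (-1 : ℤ) : LaurentPolynomial ℤ) ^ K.card * (1 - T (-1)) ^ (s.card - K.card)
      = 1 := by
    have h := Finset.prod_add (fun _ : Fin n => (T (-1 : ℤ) : LaurentPolynomial ℤ))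
      (fun _ => 1 - T (-1)) s
    simp only [prod_const] at h
    have h3 : (T (-1 : ℤ) : LaurentPolynomial ℤ) + (1 - T (-1)) = 1 := by ring
    rw [h3, one_pow] at h
    calc ∑ K ∈ s.powerset,
          (T (-1 : ℤ) : LaurentPolynomial ℤ) ^ K.card * (1 - T (-1)) ^ (s.card - K.card)
        = ∑ K ∈ s.powerset,
          (T (-1 : ℤ) : LaurentPolynomial ℤ) ^ K.card * (1 - T (-1)) ^ ((s \ K).card) :=
          Finset.sum_congr rfl fun K hK => by rw [card_sdiff_of_subset (mem_powerset.1 hK)]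
      _ = 1 := h.symm
  rw [binom, mul_one]

end sums

lemma compCount_eq_one {m r : ℕ} (σ : Fin r → Finset (Fin m)) (I : Finset (Fin r))
    (hI : I.Nonempty)
    (hadj : ∀ i ∈ I, ∀ j ∈ I, (σ i ∩ σ j).Nonempty) :
    compCount σ I = 1 := by
  rw [compCount, Nat.card_eq_one_iff_unique]
  refine ⟨⟨fun a b => ?_⟩,
    ⟨SimpleGraph.connectedComponentMk _ ⟨hI.choose, hI.choose_spec⟩⟩⟩
  refine SimpleGraph.ConnectedComponent.ind₂ (fun u v => ?_) a b
  apply SimpleGraph.ConnectedComponent.sound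
  by_cases h : u = v
  · rw [h]
  · exact SimpleGraph.Adj.reachable ⟨h, hadj u.1 u.2 v.1 v.2⟩

/-- every simplicial complex `T` (on `{1,…,n}`, with minimal nonfaces
`α_1, …, α_r`) is the auxiliary complex of a complex `S` on `{1,…,n+1}` whose minimal
nonfaces are `σ_i = α_i ∪ {n+1}`; `S` satisfies property I with witnesses the `α_i`,
`T(S) = T`, and `χ_c(S)(t) = t^{n+1} · Σ_{F ∈ T} t^{−|F|} (1 − t^{−1})^{n−|F|}`. -/
theorem stmt_9 {n r : ℕ} (α : Fin r → Finset (Fin n))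
    (hmin : ∀ i j, α i ⊆ α j → i = j)
    (σ : Fin r → Finset (Fin (n + 1)))
    (hσ : ∀ i, σ i = insert (Fin.last n) ((α i).image Fin.castSucc)) :
    PropertyI σ α ∧
    simpChrom σ =
      T ((n : ℤ) + 1) *
        ∑ F ∈ facesOf α,
          T (-(F.card : ℤ)) * (1 - T (-1)) ^ (n - F.card) := by
  classical
  have hσfun : σ = fun i => insert (Fin.last n) ((α i).image Fin.castSucc) := funext hσ
  constructor
  · constructor
    · intro i
      rw [hσ i, card_insert_image]
    · intro I hI p hp
      have hU : unionOver σ I = insert (Fin.last n) ((unionOver α I).image Fin.castSucc) := by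
        rw [hσfun]; exact unionOver_insert_image α I hI
      have hlast : Fin.last n ∈ unionOver σ I ∩ σ p := by
        rw [hU, hσ p, mem_inter]
        exact ⟨mem_insert_self _ _, mem_insert_self _ _⟩
      refine ⟨fun h => (notMem_empty _ (h ▸ hlast)).elim, fun _ => ?_⟩
      rw [hU, hσ p, insert_image_inter, card_insert_image]
  · -- the polynomial identity
    have hcomp : ∀ I : Finset (Fin r), I.Nonempty → compCount σ I = 1 := by
      intro I hI
      refine compCount_eq_one σ I hI fun i _ j _ => ⟨Fin.last n, ?_⟩
      rw [mem_inter, hσ i, hσ j]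
      exact ⟨mem_insert_self _ _, mem_insert_self _ _⟩
    have hcard : ∀ I : Finset (Fin r), I.Nonempty →
        (unionOver σ I).card = (unionOver α I).card + 1 := by
      intro I hI
      rw [hσfun, unionOver_insert_image α I hI, card_insert_image]
    have rhs_eq : ∑ F ∈ facesOf α,
        (T (-(F.card : ℤ)) : LaurentPolynomial ℤ) * (1 - T (-1)) ^ (n - F.card)
        = ∑ I ∈ (univ : Finset (Fin r)).powerset,
            (-1 : LaurentPolynomial ℤ) ^ I.card * T (-((unionOver α I).card : ℤ)) := by
      unfold facesOf
      rw [Finset.filter_congr_decidable, Finset.sum_filter]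
      have h1 : ∀ F : Finset (Fin n),
          (if (∀ i, ¬ α i ⊆ F) then
              (T (-(F.card : ℤ)) : LaurentPolynomial ℤ) * (1 - T (-1)) ^ (n - F.card)
            else 0)
          = ∑ I ∈ (univ : Finset (Fin r)).powerset,
              (if unionOver α I ⊆ F then (-1 : LaurentPolynomial ℤ) ^ I.card *
                (T (-(F.card : ℤ)) * (1 - T (-1)) ^ (n - F.card)) else 0) := by
        intro F
        have h := congrArg
          (· * ((T (-(F.card : ℤ)) : LaurentPolynomial ℤ) * (1 - T (-1)) ^ (n - F.card)))
          (face_indicator α F)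
        simp only [ite_mul, one_mul, zero_mul, Finset.sum_mul] at h
        exact h
      refine Eq.trans (Finset.sum_congr rfl fun F _ => h1 F) ?_
      rw [Finset.sum_comm]
      refine Finset.sum_congr rfl fun I _ => ?_
      rw [← Finset.sum_filter, ← Finset.mul_sum, sum_superset_T]
    unfold simpChrom
    have hterm : ∀ I ∈ (univ : Finset (Fin r)).powerset.filter (fun I => I.Nonempty),
        ((-1 : LaurentPolynomial ℤ)) ^ I.card *
          T (((n + 1 : ℕ) : ℤ) - ((unionOver σ I).card : ℤ) + (compCount σ I : ℤ))
        = T ((n : ℤ) + 1) * ((-1) ^ I.card * T (-((unionOver α I).card : ℤ))) := by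
      intro I hI
      obtain ⟨-, hne⟩ := mem_filter.1 hI
      rw [hcomp I hne, hcard I hne]
      have he : (((n + 1 : ℕ)) : ℤ) - (((unionOver α I).card + 1 : ℕ) : ℤ) + ((1 : ℕ) : ℤ)
          = ((n : ℤ) + 1) + (-((unionOver α I).card : ℤ)) := by push_cast; ring
      rw [he, T_add]
      ring
    rw [Finset.sum_congr rfl hterm, ← Finset.mul_sum, rhs_eq]
    have hsplit : ∑ I ∈ (univ : Finset (Fin r)).powerset,
        (-1 : LaurentPolynomial ℤ) ^ I.card * T (-((unionOver α I).card : ℤ))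
        = 1 + ∑ I ∈ (univ : Finset (Fin r)).powerset.filter (fun I => I.Nonempty),
            (-1 : LaurentPolynomial ℤ) ^ I.card * T (-((unionOver α I).card : ℤ)) := by
      have hfe : (univ : Finset (Fin r)).powerset.filter (fun I => I.Nonempty)
          = (univ : Finset (Fin r)).powerset.erase ∅ := by
        ext I
        simp [Finset.nonempty_iff_ne_empty, Finset.mem_erase, and_comm]
      rw [hfe, ← Finset.add_sum_erase _ _ (mem_powerset.2 (empty_subset _))]
      congr 1
      simp [unionOver]
    rw [hsplit]
    have hn : ((n + 1 : ℕ) : ℤ) = (n : ℤ) + 1 := by push_cast; ring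
    rw [hn]
    ring
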